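/- Let n be a positive integer and x₁, …, x_n distinct complex numbers, and let A ∈ ℂ^{n×n} be the Vandermonde matrix with A_{i,j} = x_i^{j−1}. Define L⁻ ∈ ℂ^{n×n} by (L⁻)_{i,j} = 0 for i < j, (L⁻)_{1,1} = 1, and (L⁻)_{i,j} = ∏_{k=1, k≠j}^{i} 1/(x_j − x_k) for i ≥ j with i ≥ 2; define U⁻ ∈ ℂ^{n×n} by (U⁻)_{i,j} = (−1)^{i+j} Σ_{1 ≤ a₁ < ⋯ < a_{j−i} ≤ j−1} x_{a₁}⋯x_{a_{j−i}} for i ≤ j (the empty sum for i = j being defined as 1) and (U⁻)_{i,j} = 0 for i > j. Then A is invertible and A^{−1} = U⁻ L⁻. -/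

import Mathlib

open Matrix

theorem seg_eq (n m : ℕ) (hm : m ≤ n) :
    (Finset.univ.filter fun k : Fin n => (k : ℕ) < m) =
      Finset.map (Fin.castLEEmb hm) Finset.univ := by
  ext k
  simp only [Finset.mem_filter, Finset.mem_univ, true_and, Finset.mem_map, Fin.castLEEmb_apply]
  constructor
  · intro h; exact ⟨⟨k, h⟩, by simp [Fin.ext_iff]⟩
  · rintro ⟨a, rfl⟩; simp [a.2]

theorem seg_card (n m : ℕ) (hm : m ≤ n) :
    (Finset.univ.filter fun k : Fin n => (k : ℕ) < m).card = m := by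
  rw [seg_eq n m hm]; simp

open Polynomial in
theorem newton_eval (n : ℕ) (x : Fin n → ℂ) (m : ℕ) (hm : m ≤ n) (t : ℂ) :
    ∏ l ∈ (Finset.univ.filter fun k : Fin n => (k : ℕ) < m), (t - x l) =
      ∑ k ∈ Finset.range (m + 1),
        (-1 : ℂ) ^ (m - k) *
          (∑ s ∈ Finset.powersetCard (m - k)
              (Finset.univ.filter fun k : Fin n => (k : ℕ) < m), ∏ i ∈ s, x i) * t ^ k := by
  set F := (Finset.univ.filter fun k : Fin n => (k : ℕ) < m) with hF
  have hcard : F.card = m := seg_card n m hm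
  set p : ℂ[X] := ∏ l ∈ F, (X - C (x l)) with hp
  have hmonic : p.Monic := monic_prod_of_monic _ _ fun l _ => monic_X_sub_C _
  have hdeg : p.natDegree = m := by
    rw [hp, natDegree_prod _ _ fun l _ => X_sub_C_ne_zero _]
    simp [hcard]
  have heval : p.eval t = ∏ l ∈ F, (t - x l) := by rw [hp, eval_prod]; simp
  have hcoeff : ∀ k ∈ Finset.range (m + 1),
      p.coeff k = (-1 : ℂ) ^ (m - k) * ∑ s ∈ Finset.powersetCard (m - k) F, ∏ i ∈ s, x i := by
    intro k hk
    rw [Finset.mem_range] at hk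
    have hk' : k ≤ F.card := by omega
    have : p = ∏ l ∈ F, (X + C (-(x l))) := by simp [hp, sub_eq_add_neg]
    rw [this, Finset.prod_X_add_C_coeff F _ hk', hcard]
    rw [Finset.mul_sum]
    refine Finset.sum_congr rfl fun s hs => ?_
    rw [Finset.mem_powersetCard] at hs
    have : ∀ i ∈ s, -x i = (-1) * x i := fun i _ => by ring
    rw [Finset.prod_congr rfl this, Finset.prod_mul_distrib, Finset.prod_const, hs.2]
  calc ∏ l ∈ F, (t - x l) = p.eval t := heval.symm
    _ = ∑ k ∈ Finset.range (m + 1), p.coeff k * t ^ k := by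
        rw [eval_eq_sum_range]; rw [hdeg]
    _ = _ := Finset.sum_congr rfl fun k hk => by rw [hcoeff k hk]

theorem AU (n : ℕ) (x : Fin n → ℂ) (r j : Fin n) :
    ∑ k : Fin n, x r ^ (k : ℕ) *
      (if (k : ℕ) ≤ (j : ℕ) then
          (-1 : ℂ) ^ ((k : ℕ) + (j : ℕ)) *
            ∑ s ∈ Finset.powersetCard ((j : ℕ) - (k : ℕ))
                (Finset.univ.filter fun k : Fin n => (k : ℕ) < (j : ℕ)),
              ∏ k ∈ s, x k
        else 0) =
    ∏ l ∈ (Finset.univ.filter fun k : Fin n => (k : ℕ) < (j : ℕ)), (x r - x l) := by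
  rw [newton_eval n x (j : ℕ) (le_of_lt j.2) (x r)]
  simp only [mul_ite, mul_zero]
  rw [← Finset.sum_filter]
  refine Finset.sum_bij' (i := fun k _ => (k : ℕ)) (j := fun k hk =>
      (⟨k, lt_of_lt_of_le (Finset.mem_range.mp hk) j.2⟩ : Fin n)) ?_ ?_ ?_ ?_ ?_
  · intro a ha
    simp only [Finset.mem_filter, Finset.mem_univ, true_and] at ha
    exact Finset.mem_range.mpr (by omega)
  · intro a ha
    simp only [Finset.mem_range] at ha
    simp only [Finset.mem_filter, Finset.mem_univ, true_and]
    omega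
  · intro a ha; exact Fin.ext rfl
  · intro a ha; rfl
  · intro a ha
    simp only [Finset.mem_filter, Finset.mem_univ, true_and] at ha
    have hsign : (-1 : ℂ) ^ ((a : ℕ) + (j : ℕ)) = (-1 : ℂ) ^ ((j : ℕ) - (a : ℕ)) := by
      rw [neg_one_pow_eq_pow_mod_two, neg_one_pow_eq_pow_mod_two ((j : ℕ) - (a : ℕ))]
      congr 1; omega
    rw [hsign]; ring

theorem alg_step (u v a b d : ℂ) (hd : d ≠ 0) (huv : v = u + d) :
    (u * a) * (d⁻¹ * b) + a * b = (v * a) * (d⁻¹ * b) := by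
  field_simp [huv]
  rw [huv]

theorem tele (n : ℕ) (x : Fin n → ℂ) (hx : Function.Injective x) (r c : Fin n) :
    ∀ M : ℕ, (c : ℕ) ≤ M → ∀ hM : M < n,
    ∑ m ∈ Finset.univ.filter (fun m : Fin n => (c : ℕ) ≤ (m : ℕ) ∧ (m : ℕ) ≤ M),
        (∏ l ∈ Finset.univ.filter (fun l : Fin n => (l : ℕ) < (m : ℕ)), (x r - x l)) *
          ∏ k ∈ Finset.univ.filter (fun k : Fin n => (k : ℕ) ≤ (m : ℕ) ∧ k ≠ c), (x c - x k)⁻¹ =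
      (∏ l ∈ Finset.univ.filter (fun l : Fin n => (l : ℕ) ≤ M ∧ l ≠ c), (x r - x l)) *
        ∏ k ∈ Finset.univ.filter (fun k : Fin n => (k : ℕ) ≤ M ∧ k ≠ c), (x c - x k)⁻¹ := by
  intro M
  induction M with
  | zero =>
    intro hc hM
    -- c = 0
    have hc0 : (c : ℕ) = 0 := Nat.le_zero.mp hc
    have h1 : (Finset.univ.filter fun m : Fin n => (c : ℕ) ≤ (m : ℕ) ∧ (m : ℕ) ≤ 0) = {c} := by
      ext m; simp [Fin.ext_iff]; omega
    have h2 : (Finset.univ.filter fun l : Fin n => (l : ℕ) ≤ 0 ∧ l ≠ c) = ∅ := by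
      ext l; simp [Fin.ext_iff]; omega
    have h3 : (Finset.univ.filter fun k : Fin n => (k : ℕ) ≤ (c : ℕ) ∧ k ≠ c) = ∅ := by
      ext l; simp [Fin.ext_iff]; omega
    have h4 : (Finset.univ.filter fun l : Fin n => (l : ℕ) < (c : ℕ)) = ∅ := by
      ext l; simp [Fin.ext_iff]; omega
    rw [h1, Finset.sum_singleton, h2, h3, h4]
  | succ M ih =>
    intro hc hM
    rcases Nat.lt_or_ge M (c : ℕ) with hlt | hge
    · -- c = M + 1 : singleton case
      have hcM : (c : ℕ) = M + 1 := by omega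
      have h1 : (Finset.univ.filter fun m : Fin n => (c : ℕ) ≤ (m : ℕ) ∧ (m : ℕ) ≤ M + 1) =
          {c} := by
        ext m; simp [Fin.ext_iff]; omega
      have h2 : (Finset.univ.filter fun l : Fin n => (l : ℕ) ≤ M + 1 ∧ l ≠ c) =
          (Finset.univ.filter fun l : Fin n => (l : ℕ) < (c : ℕ)) := by
        ext l; simp [Fin.ext_iff]; omega
      have h3 : (Finset.univ.filter fun k : Fin n => (k : ℕ) ≤ (c : ℕ) ∧ k ≠ c) =
          (Finset.univ.filter fun l : Fin n => (l : ℕ) < (c : ℕ)) := by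
        ext l; simp [Fin.ext_iff]; omega
      rw [h1, Finset.sum_singleton, h2, h3]
    · -- c ≤ M : inductive step
      have hM' : M < n := by omega
      set m1 : Fin n := ⟨M + 1, hM⟩ with hm1
      have hm1c : m1 ≠ c := by simp [hm1, Fin.ext_iff]; omega
      have hd : x c - x m1 ≠ 0 := sub_ne_zero.mpr fun h => hm1c ((hx h).symm)
      -- split the sum
      have hins : (Finset.univ.filter fun m : Fin n => (c : ℕ) ≤ (m : ℕ) ∧ (m : ℕ) ≤ M + 1) =
          insert m1 (Finset.univ.filter fun m : Fin n => (c : ℕ) ≤ (m : ℕ) ∧ (m : ℕ) ≤ M) := by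
        ext m; simp [Fin.ext_iff, hm1]; omega
      have hnotmem : m1 ∉ (Finset.univ.filter
          fun m : Fin n => (c : ℕ) ≤ (m : ℕ) ∧ (m : ℕ) ≤ M) := by
        simp [hm1]
      rw [hins, Finset.sum_insert hnotmem, ih hge hM']
      -- names
      set P := ∏ l ∈ Finset.univ.filter (fun l : Fin n => (l : ℕ) ≤ M ∧ l ≠ c), (x r - x l)
        with hP
      set Q := ∏ k ∈ Finset.univ.filter (fun k : Fin n => (k : ℕ) ≤ M ∧ k ≠ c), (x c - x k)⁻¹
        with hQ
      -- RHS filters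
      have hR1 : (Finset.univ.filter fun l : Fin n => (l : ℕ) ≤ M + 1 ∧ l ≠ c) =
          insert m1 (Finset.univ.filter fun l : Fin n => (l : ℕ) ≤ M ∧ l ≠ c) := by
        ext l; simp [Fin.ext_iff, hm1]; omega
      have hnm2 : m1 ∉ (Finset.univ.filter fun l : Fin n => (l : ℕ) ≤ M ∧ l ≠ c) := by
        simp [hm1]
      -- the new term's first product : l < M+1  ↔  l ≤ M, and split off l = c
      have hT1 : (Finset.univ.filter fun l : Fin n => (l : ℕ) < ((m1 : Fin n) : ℕ)) =
          insert c (Finset.univ.filter fun l : Fin n => (l : ℕ) ≤ M ∧ l ≠ c) := by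
        ext l; simp [Fin.ext_iff, hm1]; omega
      have hnc : c ∉ (Finset.univ.filter fun l : Fin n => (l : ℕ) ≤ M ∧ l ≠ c) := by simp
      have hT2 : (Finset.univ.filter fun k : Fin n => (k : ℕ) ≤ ((m1 : Fin n) : ℕ) ∧ k ≠ c) =
          insert m1 (Finset.univ.filter fun k : Fin n => (k : ℕ) ≤ M ∧ k ≠ c) := by
        ext l; simp [Fin.ext_iff, hm1]; omega
      rw [hT1, hT2, Finset.prod_insert hnc, Finset.prod_insert hnm2,
        Finset.prod_insert hnm2, hP, hQ]
      exact alg_step _ _ _ _ _ hd (by ring)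

/-- For distinct nodes `x₁,…,x_n`, the Vandermonde matrix `A` with `A_{i,j} = x_i^{j-1}`
is invertible, and `A⁻¹ = U⁻ L⁻` where `(L⁻)_{i,j} = ∏_{k ≤ i, k ≠ j} (x_j - x_k)⁻¹` for
`i ≥ j` and `0` otherwise, and `(U⁻)_{i,j} = (-1)^{i+j} e_{j-i}(x₁,…,x_{j-1})` for `i ≤ j`
(elementary symmetric polynomial, with the empty sum equal to `1`) and `0` otherwise. -/
theorem vandermonde_inverse (n : ℕ) (hn : 0 < n) (x : Fin n → ℂ)
    (hx : Function.Injective x) :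
    IsUnit (Matrix.of fun i j : Fin n => x i ^ (j : ℕ)).det ∧
    (Matrix.of fun i j : Fin n => x i ^ (j : ℕ))⁻¹ =
      (Matrix.of fun i j : Fin n =>
        if (i : ℕ) ≤ (j : ℕ) then
          (-1 : ℂ) ^ ((i : ℕ) + (j : ℕ)) *
            ∑ s ∈ Finset.powersetCard ((j : ℕ) - (i : ℕ))
                (Finset.univ.filter fun k : Fin n => (k : ℕ) < (j : ℕ)),
              ∏ k ∈ s, x k
        else 0) *
      (Matrix.of fun i j : Fin n =>
        if (j : ℕ) ≤ (i : ℕ) then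
          ∏ k ∈ Finset.univ.filter fun k : Fin n => (k : ℕ) ≤ (i : ℕ) ∧ k ≠ j,
            (x j - x k)⁻¹
        else 0) := by
  set A := (Matrix.of fun i j : Fin n => x i ^ (j : ℕ)) with hA
  set U := (Matrix.of fun i j : Fin n =>
        if (i : ℕ) ≤ (j : ℕ) then
          (-1 : ℂ) ^ ((i : ℕ) + (j : ℕ)) *
            ∑ s ∈ Finset.powersetCard ((j : ℕ) - (i : ℕ))
                (Finset.univ.filter fun k : Fin n => (k : ℕ) < (j : ℕ)),
              ∏ k ∈ s, x k
        else 0) with hU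
  set L := (Matrix.of fun i j : Fin n =>
        if (j : ℕ) ≤ (i : ℕ) then
          ∏ k ∈ Finset.univ.filter fun k : Fin n => (k : ℕ) ≤ (i : ℕ) ∧ k ≠ j,
            (x j - x k)⁻¹
        else 0) with hL
  set N := (Matrix.of fun r m : Fin n =>
      ∏ l ∈ (Finset.univ.filter fun k : Fin n => (k : ℕ) < (m : ℕ)), (x r - x l)) with hN
  have hAU : A * U = N := by
    ext r m
    rw [Matrix.mul_apply]
    simp only [hA, hU, hN, Matrix.of_apply]
    exact AU n x r m
  have hNL : N * L = 1 := by
    ext r c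
    rw [Matrix.mul_apply, Matrix.one_apply]
    simp only [hN, hL, Matrix.of_apply]
    -- term vanishes when r < m
    have hvan : ∀ m : Fin n, (r : ℕ) < (m : ℕ) →
        (∏ l ∈ (Finset.univ.filter fun k : Fin n => (k : ℕ) < (m : ℕ)), (x r - x l)) = 0 := by
      intro m hm
      refine Finset.prod_eq_zero (i := r) ?_ (by ring)
      simp only [Finset.mem_filter, Finset.mem_univ, true_and]
      exact hm
    rcases lt_trichotomy (r : ℕ) (c : ℕ) with hlt | heq | hgt
    · rw [if_neg (by intro h; rw [h] at hlt; omega)]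
      refine Finset.sum_eq_zero fun m _ => ?_
      by_cases hcm : (c : ℕ) ≤ (m : ℕ)
      · rw [hvan m (by omega)]; ring
      · rw [if_neg hcm, mul_zero]
    · have hrc : r = c := Fin.ext heq
      subst hrc
      rw [if_pos rfl]
      rw [Finset.sum_eq_single r]
      · rw [if_pos le_rfl]
        have hfe : (Finset.univ.filter fun k : Fin n => (k : ℕ) ≤ (r : ℕ) ∧ k ≠ r) =
            (Finset.univ.filter fun k : Fin n => (k : ℕ) < (r : ℕ)) := by
          ext k; simp [Fin.ext_iff]; omega
        rw [hfe, ← Finset.prod_mul_distrib]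
        refine Finset.prod_eq_one fun k hk => ?_
        simp only [Finset.mem_filter, Finset.mem_univ, true_and] at hk
        exact mul_inv_cancel₀ (sub_ne_zero.mpr fun h => (by omega : (k:ℕ) ≠ (r:ℕ))
          (congrArg Fin.val (hx h.symm)))
      · intro m _ hm
        by_cases hcm : (r : ℕ) ≤ (m : ℕ)
        · have : (r : ℕ) < (m : ℕ) := lt_of_le_of_ne hcm fun h => hm (Fin.ext h.symm)
          rw [hvan m this]; ring
        · rw [if_neg hcm, mul_zero]
      · intro h; exact absurd (Finset.mem_univ r) h
    · rw [if_neg (by intro h; rw [h] at hgt; omega)]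
      have hsub : ∑ m : Fin n,
          (∏ l ∈ (Finset.univ.filter fun k : Fin n => (k : ℕ) < (m : ℕ)), (x r - x l)) *
            (if (c : ℕ) ≤ (m : ℕ) then
              ∏ k ∈ Finset.univ.filter fun k : Fin n => (k : ℕ) ≤ (m : ℕ) ∧ k ≠ c,
                (x c - x k)⁻¹ else 0) =
          ∑ m ∈ Finset.univ.filter (fun m : Fin n => (c : ℕ) ≤ (m : ℕ) ∧ (m : ℕ) ≤ (r : ℕ)),
            (∏ l ∈ (Finset.univ.filter fun k : Fin n => (k : ℕ) < (m : ℕ)), (x r - x l)) *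
              ∏ k ∈ Finset.univ.filter (fun k : Fin n => (k : ℕ) ≤ (m : ℕ) ∧ k ≠ c),
                (x c - x k)⁻¹ := by
        rw [← Finset.sum_subset (Finset.subset_univ _) ?_]
        · refine Finset.sum_congr rfl fun m hm => ?_
          simp only [Finset.mem_filter, Finset.mem_univ, true_and] at hm
          rw [if_pos hm.1]
        · intro m _ hm
          simp only [Finset.mem_filter, Finset.mem_univ, true_and, not_and, not_le] at hm
          by_cases hcm : (c : ℕ) ≤ (m : ℕ)
          · rw [hvan m (hm hcm)]; ring
          · rw [if_neg hcm, mul_zero]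
      rw [hsub, tele n x hx r c (r : ℕ) (le_of_lt hgt) r.2]
      refine mul_eq_zero_of_left (Finset.prod_eq_zero (i := r) ?_ (by ring)) _
      simp only [Finset.mem_filter, Finset.mem_univ, true_and]
      exact ⟨le_rfl, fun h => by rw [h] at hgt; omega⟩
  have hABL : A * (U * L) = 1 := by rw [← Matrix.mul_assoc, hAU, hNL]
  exact ⟨Matrix.isUnit_det_of_right_inverse hABL, Matrix.inv_eq_right_inv hABL⟩
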